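/- Let p be an odd prime and let W be the group with presentation ⟨a,b,c,s | a^p = b^p = c^p = [a,b] = [b,c] = [c,a] = 1, s^p = a, a^s = a, b^s = ab, c^s = a⁻¹b⁻²c⟩. Then W is isomorphic to the group ⟨x,y,z | x^{p²} = y^p = z^p = [y,z] = 1, [x,y] = x^p, [x,z] = y⟩, via the map sending a ↦ x^p, b ↦ x^{p(p−1)/2} y⁻¹, c ↦ z⁻², s ↦ x. -/

import Mathlib

/-- The relators of the presentation
`⟨a,b,c,s | a^p = b^p = c^p = [a,b] = [b,c] = [c,a] = 1, s^p = a,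
a^s = a, b^s = ab, c^s = a⁻¹b⁻²c⟩`, with generators `a = 0`, `b = 1`, `c = 2`, `s = 3`
and `[g,h] = g⁻¹h⁻¹gh`, `g^s = s⁻¹gs`. -/
def relsW (p : ℕ) : Set (FreeGroup (Fin 4)) :=
  letI a : FreeGroup (Fin 4) := FreeGroup.of 0
  letI b : FreeGroup (Fin 4) := FreeGroup.of 1
  letI c : FreeGroup (Fin 4) := FreeGroup.of 2
  letI s : FreeGroup (Fin 4) := FreeGroup.of 3
  {a ^ p, b ^ p, c ^ p,
   a⁻¹ * b⁻¹ * a * b, b⁻¹ * c⁻¹ * b * c, c⁻¹ * a⁻¹ * c * a,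
   s ^ p * a⁻¹,
   (s⁻¹ * a * s) * a⁻¹,
   (s⁻¹ * b * s) * (a * b)⁻¹,
   (s⁻¹ * c * s) * (a⁻¹ * b⁻¹ * b⁻¹ * c)⁻¹}

/-- The relators of the presentation
`⟨x,y,z | x^{p²} = y^p = z^p = [y,z] = 1, [x,y] = x^p, [x,z] = y⟩`,
with generators `x = 0`, `y = 1`, `z = 2` and `[g,h] = g⁻¹h⁻¹gh`. -/
def relsB (p : ℕ) : Set (FreeGroup (Fin 3)) :=
  letI x : FreeGroup (Fin 3) := FreeGroup.of 0
  letI y : FreeGroup (Fin 3) := FreeGroup.of 1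
  letI z : FreeGroup (Fin 3) := FreeGroup.of 2
  {x ^ (p ^ 2), y ^ p, z ^ p,
   y⁻¹ * z⁻¹ * y * z,
   (x⁻¹ * y⁻¹ * x * y) * (x ^ p)⁻¹,
   (x⁻¹ * z⁻¹ * x * z) * y⁻¹}

theorem rel_eq_one' {α : Type*} {rels : Set (FreeGroup α)} {r : FreeGroup α} (h : r ∈ rels) :
    PresentedGroup.mk rels r = 1 :=
  (QuotientGroup.eq_one_iff r).mpr (Subgroup.subset_normalClosure h)

theorem conj_pow_eq {G : Type*} [Group G] (s g : G) (n : ℕ) :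
    s⁻¹ * g ^ n * s = (s⁻¹ * g * s) ^ n := by
  induction n with
  | zero => simp
  | succ n ih => rw [pow_succ, pow_succ, ← ih]; group

theorem commute_of_comm_rel {G : Type*} [Group G] {a b : G} (h : a⁻¹ * b⁻¹ * a * b = 1) :
    Commute a b := by
  have h2 : (b*a)⁻¹ * (a*b) = a⁻¹ * b⁻¹ * a * b := by group
  rw [h, inv_mul_eq_one] at h2
  exact h2.symm

theorem comm_rel_of_commute {G : Type*} [Group G] {a b : G} (h : Commute a b) :
    a⁻¹ * b⁻¹ * a * b = 1 := by
  rw [show a⁻¹*b⁻¹*a*b = a⁻¹*b⁻¹*(a*b) by group, h.eq]; group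

theorem sum_pow_modEq (p k : ℕ) (hk : p = 2*k+1) :
    (∑ i ∈ Finset.range p, (p+1)^(i+1)) ≡ p [MOD p^2] := by
  have hfac : ∀ a b : ℕ, a + b*p^2 ≡ a [MOD p^2] := by
    intro a b
    calc a + b*p^2 ≡ a + 0 [MOD p^2] :=
          Nat.ModEq.add_left a ((Nat.modEq_zero_iff_dvd).mpr ⟨b, by ring⟩)
      _ = a := by ring
  have hterm : ∀ j : ℕ, (p+1)^j ≡ 1 + j*p [MOD p^2] := by
    intro j; induction j with
    | zero => simp [Nat.ModEq.refl]
    | succ n ih =>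
      calc (p+1)^(n+1) = (p+1)^n * (p+1) := pow_succ _ _
        _ ≡ (1+n*p) * (p+1) [MOD p^2] := ih.mul_right _
        _ = (1 + (n+1)*p) + n*p^2 := by ring
        _ ≡ 1 + (n+1)*p [MOD p^2] := hfac _ _
  have hsum : ∀ n : ℕ, (∑ i ∈ Finset.range n, (p+1)^(i+1)) ≡
      (∑ i ∈ Finset.range n, (1 + (i+1)*p)) [MOD p^2] := by
    intro n; induction n with
    | zero => simp [Nat.ModEq.refl]
    | succ n ih =>
      rw [Finset.sum_range_succ, Finset.sum_range_succ]
      exact ih.add (hterm (n+1))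
  have hid : (∑ i ∈ Finset.range p, i) = p*k := by
    have h1 := Finset.sum_range_id_mul_two p
    have h2 : p - 1 = 2*k := by omega
    rw [h2] at h1
    have h3 : (∑ i ∈ Finset.range p, i) * 2 = (p*k)*2 := by rw [h1]; ring
    exact Nat.eq_of_mul_eq_mul_right two_pos h3
  have heval : (∑ i ∈ Finset.range p, (1 + (i+1)*p)) = p + (k+1)*p^2 := by
    have h1 : (∑ i ∈ Finset.range p, (1 + (i+1)*p)) =
        p + (∑ i ∈ Finset.range p, i + p) * p := by
      rw [Finset.sum_add_distrib, Finset.sum_const, Finset.card_range, smul_eq_mul, mul_one,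
        ← Finset.sum_mul, Finset.sum_add_distrib, Finset.sum_const, Finset.card_range,
        smul_eq_mul, mul_one]
    rw [h1, hid, hk]; ring
  calc (∑ i ∈ Finset.range p, (p+1)^(i+1)) ≡ p + (k+1)*p^2 [MOD p^2] :=
        (hsum p).trans (heval ▸ Nat.ModEq.refl _)
    _ ≡ p [MOD p^2] := hfac _ _

theorem Bfacts {G : Type*} [Group G] {p k : ℕ} (hk : p = 2*k+1) {X Y Z : G}
    (hX : X^(p^2) = 1) (hY : Y^p = 1)
    (r5 : X⁻¹*Y⁻¹*X*Y = X^p) (r6 : X⁻¹*Z⁻¹*X*Z = Y) :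
    Commute (X^p) Y ∧ (X*Y)^p = X^p ∧ Commute (X^p) Z ∧
      (X⁻¹*Y⁻¹*X = X^p*Y⁻¹) ∧ (X⁻¹*Z*X = Z*Y⁻¹) := by
  have congX : ∀ a b : ℕ, a ≡ b [MOD p^2] → X^a = X^b := by
    intro a b h
    exact pow_eq_pow_iff_modEq.mpr (h.of_dvd (orderOf_dvd_of_pow_eq_one hX))
  have hfac : ∀ a b : ℕ, a + b*p^2 ≡ a [MOD p^2] := by
    intro a b
    calc a + b*p^2 ≡ a + 0 [MOD p^2] :=
          Nat.ModEq.add_left a ((Nat.modEq_zero_iff_dvd).mpr ⟨b, by ring⟩)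
      _ = a := by ring
  have cY : Y⁻¹ * X * Y = X^(p+1) := by
    have h' : Y⁻¹ * X * Y = X * (X⁻¹*Y⁻¹*X*Y) := by group
    rw [h', r5, ← pow_succ']
  have cYn : ∀ n : ℕ, Y⁻¹ * X^n * Y = X^((p+1)*n) := by
    intro n; rw [conj_pow_eq, cY, ← pow_mul]
  have cXpY : Commute (X^p) Y := by
    have h2 : Y⁻¹ * X^p * Y = X^p := by
      rw [cYn p]
      exact congX _ _ (by rw [show (p+1)*p = p + 1*p^2 by ring]; exact hfac p 1)
    have h3 : X^p * Y = Y * (Y⁻¹ * X^p * Y) := by group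
    rw [h2] at h3; exact h3
  have d4 : ∀ n : ℕ, X * Y^n = Y^n * X^((p+1)^n) := by
    intro n; induction n with
    | zero => simp
    | succ n ih =>
      have h1 : X * Y^(n+1) = (X * Y^n) * Y := by rw [pow_succ, ← mul_assoc]
      rw [h1, ih]
      have h2 : X^((p+1)^n) * Y = Y * X^((p+1)*(p+1)^n) := by
        have h4 : X^((p+1)^n) * Y = Y * (Y⁻¹ * X^((p+1)^n) * Y) := by group
        rw [h4, cYn]
      rw [mul_assoc, h2, ← mul_assoc, ← pow_succ]
      congr 1
      congr 1
      ring
  have d5 : ∀ n : ℕ, (X*Y)^n = Y^n * X^(∑ i ∈ Finset.range n, (p+1)^(i+1)) := by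
    intro n; induction n with
    | zero => simp
    | succ n ih =>
      rw [pow_succ' (X*Y) n, ih, Finset.sum_range_succ]
      rw [show X*Y*(Y^n * X^(∑ i ∈ Finset.range n, (p+1)^(i+1)))
          = (X * Y^(n+1)) * X^(∑ i ∈ Finset.range n, (p+1)^(i+1)) by
        rw [pow_succ' Y n]; group]
      rw [d4 (n+1), mul_assoc, ← pow_add]
      congr 1
      congr 1
      ring
  have d7 : (X*Y)^p = X^p := by
    rw [d5 p, hY, one_mul]
    exact congX _ _ (sum_pow_modEq p k hk)
  have zX : Z⁻¹ * X * Z = X * Y := by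
    have h1 : Z⁻¹*X*Z = X * (X⁻¹*Z⁻¹*X*Z) := by group
    rw [h1, r6]
  have cXpZ : Commute (X^p) Z := by
    have h2 : Z⁻¹ * X^p * Z = X^p := by rw [conj_pow_eq, zX, d7]
    have h3 : X^p * Z = Z * (Z⁻¹ * X^p * Z) := by group
    rw [h2] at h3; exact h3
  have b2 : X⁻¹ * Y⁻¹ * X = X^p * Y⁻¹ := by
    have h1 : X⁻¹*Y⁻¹*X = (X⁻¹*Y⁻¹*X*Y)*Y⁻¹ := by group
    rw [h1, r5]
  have d10 : X⁻¹ * Z * X = Z * Y⁻¹ := by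
    have h2 : X * Z = Z * (X * Y) := by
      have h3 : X*Z = Z*(Z⁻¹*X*Z) := by group
      rw [h3, zX]
    have h4 : Z * X = X * Z * Y⁻¹ := by
      have h5 : Z * X = Z * (X*Y) * Y⁻¹ := by group
      rw [← h2] at h5; exact h5
    rw [show X⁻¹*Z*X = X⁻¹*(Z*X) by group, h4]; group
  exact ⟨cXpY, d7, cXpZ, b2, d10⟩

/-- For an odd prime `p`, the group `W` presented by `relsW p` is isomorphic
to the group presented by `relsB p`, via the map `a ↦ x^p`, `b ↦ x^{p(p−1)/2} y⁻¹`,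
`c ↦ z⁻²`, `s ↦ x`. -/
theorem stmt_5 (p : ℕ) (hp : p.Prime) (hodd : Odd p) :
    ∃ e : PresentedGroup (relsW p) ≃* PresentedGroup (relsB p),
      e (PresentedGroup.of 0) = (PresentedGroup.of 0 : PresentedGroup (relsB p)) ^ p ∧
      e (PresentedGroup.of 1) =
        (PresentedGroup.of 0 : PresentedGroup (relsB p)) ^ (p * (p - 1) / 2) *
          (PresentedGroup.of 1 : PresentedGroup (relsB p))⁻¹ ∧
      e (PresentedGroup.of 2) =
        ((PresentedGroup.of 2 : PresentedGroup (relsB p)) ^ 2)⁻¹ ∧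
      e (PresentedGroup.of 3) = (PresentedGroup.of 0 : PresentedGroup (relsB p)) := by
  obtain ⟨k, hk⟩ := hodd
  have hm : p * (p - 1) / 2 = p * k := by
    have h2 : p - 1 = 2*k := by omega
    rw [h2, show p*(2*k) = (p*k)*2 by ring, Nat.mul_div_cancel _ two_pos]
  -- generators
  set X : PresentedGroup (relsB p) := PresentedGroup.of 0 with hXdef
  set Y : PresentedGroup (relsB p) := PresentedGroup.of 1 with hYdef
  set Z : PresentedGroup (relsB p) := PresentedGroup.of 2 with hZdef
  set A : PresentedGroup (relsW p) := PresentedGroup.of 0 with hAdef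
  set B : PresentedGroup (relsW p) := PresentedGroup.of 1 with hBdef
  set C : PresentedGroup (relsW p) := PresentedGroup.of 2 with hCdef
  set S : PresentedGroup (relsW p) := PresentedGroup.of 3 with hSdef
  -- relations in B
  have hX1 : X ^ (p^2) = 1 := by
    have h := rel_eq_one' (show (FreeGroup.of 0 : FreeGroup (Fin 3)) ^ (p^2) ∈ relsB p from Set.mem_insert _ _)
    simp only [map_pow] at h; exact h
  have hY1 : Y ^ p = 1 := by
    have h := rel_eq_one' (show (FreeGroup.of 1 : FreeGroup (Fin 3)) ^ p ∈ relsB p from Set.mem_insert_of_mem _ (Set.mem_insert _ _))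
    simp only [map_pow] at h; exact h
  have hZ1 : Z ^ p = 1 := by
    have h := rel_eq_one' (show (FreeGroup.of 2 : FreeGroup (Fin 3)) ^ p ∈ relsB p from Set.mem_insert_of_mem _ (Set.mem_insert_of_mem _ (Set.mem_insert _ _)))
    simp only [map_pow] at h; exact h
  have cYZ : Commute Y Z := by
    apply commute_of_comm_rel
    have h := rel_eq_one' (show (FreeGroup.of 1)⁻¹ * (FreeGroup.of 2)⁻¹ * FreeGroup.of 1 *
        (FreeGroup.of 2 : FreeGroup (Fin 3)) ∈ relsB p from Set.mem_insert_of_mem _ (Set.mem_insert_of_mem _ (Set.mem_insert_of_mem _ (Set.mem_insert _ _))))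
    simp only [map_mul, map_inv] at h; exact h
  have rB5 : X⁻¹*Y⁻¹*X*Y = X^p := by
    apply mul_inv_eq_one.mp
    have h := rel_eq_one' (show ((FreeGroup.of 0)⁻¹ * (FreeGroup.of 1)⁻¹ * FreeGroup.of 0 *
        FreeGroup.of 1) * ((FreeGroup.of 0 : FreeGroup (Fin 3)) ^ p)⁻¹ ∈ relsB p from Set.mem_insert_of_mem _ (Set.mem_insert_of_mem _ (Set.mem_insert_of_mem _ (Set.mem_insert_of_mem _ (Set.mem_insert _ _)))))
    simp only [map_mul, map_inv, map_pow] at h; exact h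
  have rB6 : X⁻¹*Z⁻¹*X*Z = Y := by
    apply mul_inv_eq_one.mp
    have h := rel_eq_one' (show ((FreeGroup.of 0)⁻¹ * (FreeGroup.of 2)⁻¹ * FreeGroup.of 0 *
        FreeGroup.of 2) * ((FreeGroup.of 1 : FreeGroup (Fin 3)))⁻¹ ∈ relsB p from Set.mem_insert_of_mem _ (Set.mem_insert_of_mem _ (Set.mem_insert_of_mem _ (Set.mem_insert_of_mem _ (Set.mem_insert_of_mem _ (Set.mem_singleton _))))))
    simp only [map_mul, map_inv, map_pow] at h; exact h
  obtain ⟨cXpY, d7, cXpZ, b2, d10⟩ := Bfacts hk hX1 hY1 rB5 rB6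
  -- relations in W
  have hA1 : A ^ p = 1 := by
    have h := rel_eq_one' (show (FreeGroup.of 0 : FreeGroup (Fin 4)) ^ p ∈ relsW p from Set.mem_insert _ _)
    simp only [map_pow] at h; exact h
  have hB1 : B ^ p = 1 := by
    have h := rel_eq_one' (show (FreeGroup.of 1 : FreeGroup (Fin 4)) ^ p ∈ relsW p from Set.mem_insert_of_mem _ (Set.mem_insert _ _))
    simp only [map_pow] at h; exact h
  have hC1 : C ^ p = 1 := by
    have h := rel_eq_one' (show (FreeGroup.of 2 : FreeGroup (Fin 4)) ^ p ∈ relsW p from Set.mem_insert_of_mem _ (Set.mem_insert_of_mem _ (Set.mem_insert _ _)))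
    simp only [map_pow] at h; exact h
  have cAB : Commute A B := by
    apply commute_of_comm_rel
    have h := rel_eq_one' (show (FreeGroup.of 0)⁻¹ * (FreeGroup.of 1)⁻¹ * FreeGroup.of 0 *
        (FreeGroup.of 1 : FreeGroup (Fin 4)) ∈ relsW p from Set.mem_insert_of_mem _ (Set.mem_insert_of_mem _ (Set.mem_insert_of_mem _ (Set.mem_insert _ _))))
    simp only [map_mul, map_inv] at h; exact h
  have cBC : Commute B C := by
    apply commute_of_comm_rel
    have h := rel_eq_one' (show (FreeGroup.of 1)⁻¹ * (FreeGroup.of 2)⁻¹ * FreeGroup.of 1 *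
        (FreeGroup.of 2 : FreeGroup (Fin 4)) ∈ relsW p from Set.mem_insert_of_mem _ (Set.mem_insert_of_mem _ (Set.mem_insert_of_mem _ (Set.mem_insert_of_mem _ (Set.mem_insert _ _)))))
    simp only [map_mul, map_inv] at h; exact h
  have cCA : Commute C A := by
    apply commute_of_comm_rel
    have h := rel_eq_one' (show (FreeGroup.of 2)⁻¹ * (FreeGroup.of 0)⁻¹ * FreeGroup.of 2 *
        (FreeGroup.of 0 : FreeGroup (Fin 4)) ∈ relsW p from Set.mem_insert_of_mem _ (Set.mem_insert_of_mem _ (Set.mem_insert_of_mem _ (Set.mem_insert_of_mem _ (Set.mem_insert_of_mem _ (Set.mem_insert _ _))))))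
    simp only [map_mul, map_inv] at h; exact h
  have wSp : S ^ p = A := by
    apply mul_inv_eq_one.mp
    have h := rel_eq_one' (show (FreeGroup.of 3 : FreeGroup (Fin 4)) ^ p *
        (FreeGroup.of 0)⁻¹ ∈ relsW p from Set.mem_insert_of_mem _ (Set.mem_insert_of_mem _ (Set.mem_insert_of_mem _ (Set.mem_insert_of_mem _ (Set.mem_insert_of_mem _ (Set.mem_insert_of_mem _ (Set.mem_insert _ _)))))))
    simp only [map_mul, map_inv, map_pow] at h; exact h
  have wSA : S⁻¹ * A * S = A := by
    apply mul_inv_eq_one.mp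
    have h := rel_eq_one' (show ((FreeGroup.of 3)⁻¹ * FreeGroup.of 0 * FreeGroup.of 3) *
        ((FreeGroup.of 0 : FreeGroup (Fin 4)))⁻¹ ∈ relsW p from Set.mem_insert_of_mem _ (Set.mem_insert_of_mem _ (Set.mem_insert_of_mem _ (Set.mem_insert_of_mem _ (Set.mem_insert_of_mem _ (Set.mem_insert_of_mem _ (Set.mem_insert_of_mem _ (Set.mem_insert _ _))))))))
    simp only [map_mul, map_inv, map_pow] at h; exact h
  have wSB : S⁻¹ * B * S = A * B := by
    apply mul_inv_eq_one.mp
    have h := rel_eq_one' (show ((FreeGroup.of 3)⁻¹ * FreeGroup.of 1 * FreeGroup.of 3) *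
        ((FreeGroup.of 0 : FreeGroup (Fin 4)) * FreeGroup.of 1)⁻¹ ∈ relsW p from Set.mem_insert_of_mem _ (Set.mem_insert_of_mem _ (Set.mem_insert_of_mem _ (Set.mem_insert_of_mem _ (Set.mem_insert_of_mem _ (Set.mem_insert_of_mem _ (Set.mem_insert_of_mem _ (Set.mem_insert_of_mem _ (Set.mem_insert _ _)))))))))
    simp only [map_mul, map_inv, map_pow] at h; exact h
  have wSC : S⁻¹ * C * S = A⁻¹ * B⁻¹ * B⁻¹ * C := by
    apply mul_inv_eq_one.mp
    have h := rel_eq_one' (show ((FreeGroup.of 3)⁻¹ * FreeGroup.of 2 * FreeGroup.of 3) *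
        ((FreeGroup.of 0 : FreeGroup (Fin 4))⁻¹ * (FreeGroup.of 1)⁻¹ * (FreeGroup.of 1)⁻¹ *
          FreeGroup.of 2)⁻¹ ∈ relsW p from Set.mem_insert_of_mem _ (Set.mem_insert_of_mem _ (Set.mem_insert_of_mem _ (Set.mem_insert_of_mem _ (Set.mem_insert_of_mem _ (Set.mem_insert_of_mem _ (Set.mem_insert_of_mem _ (Set.mem_insert_of_mem _ (Set.mem_insert_of_mem _ (Set.mem_singleton _))))))))))
    simp only [map_mul, map_inv, map_pow] at h; exact h
  -- the two maps on generators
  set fB : Fin 4 → PresentedGroup (relsB p) :=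
    ![X^p, X^(p*(p-1)/2) * Y⁻¹, (Z^2)⁻¹, X] with hfBdef
  set gW : Fin 3 → PresentedGroup (relsW p) :=
    ![S, B⁻¹ * A^k, (C^(k+1))⁻¹] with hgWdef
  have hfB0 : fB 0 = X^p := rfl
  have hfB1 : fB 1 = X^(p*(p-1)/2) * Y⁻¹ := rfl
  have hfB2 : fB 2 = (Z^2)⁻¹ := rfl
  have hfB3 : fB 3 = X := rfl
  have hgW0 : gW 0 = S := rfl
  have hgW1 : gW 1 = B⁻¹ * A^k := rfl
  have hgW2 : gW 2 = (C^(k+1))⁻¹ := rfl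
  -- auxiliary commutation facts
  have cmY : Commute (X^(p*k)) Y := by rw [pow_mul]; exact cXpY.pow_left k
  -- fB respects the relations of W
  have hfBrel : ∀ r ∈ relsW p, FreeGroup.lift fB r = 1 := by
    intro r hr
    simp only [relsW, Set.mem_insert_iff, Set.mem_singleton_iff] at hr
    rcases hr with rfl|rfl|rfl|rfl|rfl|rfl|rfl|rfl|rfl|rfl <;>
      simp only [map_mul, map_inv, map_pow, FreeGroup.lift_apply_of, hfB0, hfB1, hfB2, hfB3]
    · -- a^p
      rw [← pow_mul, show p*p = p^2 by ring]; exact hX1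
    · -- b^p
      rw [hm, (cmY.inv_right).mul_pow, inv_pow, hY1, inv_one, mul_one, ← pow_mul,
        show p*k*p = p^2*k by ring, pow_mul, hX1, one_pow]
    · -- c^p
      rw [inv_pow, ← pow_mul, show 2*p = p*2 by ring, pow_mul, hZ1, one_pow, inv_one]
    · -- [a,b]
      rw [hm]
      exact comm_rel_of_commute
        (Commute.mul_right ((Commute.refl X).pow_pow p (p*k)) cXpY.inv_right)
    · -- [b,c]
      rw [hm]
      refine comm_rel_of_commute (Commute.mul_left ?_ ?_)
      · rw [pow_mul]; exact (cXpZ.pow_pow k 2).inv_right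
      · exact ((cYZ.pow_right 2).inv_left).inv_right
    · -- [c,a]
      exact comm_rel_of_commute ((cXpZ.pow_right 2).inv_right).symm
    · -- s^p = a
      group
    · -- a^s = a
      group
    · -- b^s = ab
      rw [hm, show X⁻¹ * (X^(p*k)*Y⁻¹) * X = X^(p*k) * (X⁻¹ * Y⁻¹ * X) by group, b2]; group
    · -- c^s = a⁻¹ b⁻² c
      rw [hm]
      have eqL : X⁻¹ * (Z^2)⁻¹ * X = Y^2 * (Z^2)⁻¹ := by
        rw [show X⁻¹ * (Z^2)⁻¹ * X = (X⁻¹ * Z^2 * X)⁻¹ by group, conj_pow_eq, d10,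
          (cYZ.symm.inv_right).mul_pow]
        group
      have hu : (X^(p*k) * Y⁻¹)⁻¹ = (X^(p*k))⁻¹ * Y := by
        rw [mul_inv_rev, inv_inv]; exact (cmY.inv_left.eq).symm
      have hsw : Y * (X^(p*k))⁻¹ = (X^(p*k))⁻¹ * Y := cmY.inv_left.eq.symm
      have eqR : (X^p)⁻¹ * (X^(p*k)*Y⁻¹)⁻¹ * (X^(p*k)*Y⁻¹)⁻¹ * (Z^2)⁻¹ = Y^2 * (Z^2)⁻¹ := by
        rw [hu]
        calc (X^p)⁻¹ * ((X^(p*k))⁻¹ * Y) * ((X^(p*k))⁻¹ * Y) * (Z^2)⁻¹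
            = (X^p)⁻¹ * (X^(p*k))⁻¹ * (Y * (X^(p*k))⁻¹) * Y * (Z^2)⁻¹ := by group
          _ = (X^p)⁻¹ * (X^(p*k))⁻¹ * ((X^(p*k))⁻¹ * Y) * Y * (Z^2)⁻¹ := by rw [hsw]
          _ = (X^(p + (p*k + p*k)))⁻¹ * (Y*Y * (Z^2)⁻¹) := by rw [pow_add, pow_add]; group
          _ = Y^2 * (Z^2)⁻¹ := by
              rw [show p + (p*k + p*k) = p^2 by rw [hk]; ring, hX1, inv_one, one_mul,
                ← pow_two]
      rw [eqL, eqR]; group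
  -- gW respects the relations of B
  have hgWrel : ∀ r ∈ relsB p, FreeGroup.lift gW r = 1 := by
    intro r hr
    simp only [relsB, Set.mem_insert_iff, Set.mem_singleton_iff] at hr
    rcases hr with rfl|rfl|rfl|rfl|rfl|rfl <;>
      simp only [map_mul, map_inv, map_pow, FreeGroup.lift_apply_of, hgW0, hgW1, hgW2]
    · -- x^(p^2)
      rw [show p^2 = p*p by ring, pow_mul, wSp]; exact hA1
    · -- y^p
      have c1 : Commute B⁻¹ (A^k) := (cAB.symm.pow_right k).inv_left
      rw [c1.mul_pow, inv_pow, hB1, inv_one, one_mul, ← pow_mul,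
        show k*p = p*k by ring, pow_mul, hA1, one_pow]
    · -- z^p
      rw [inv_pow, ← pow_mul, show (k+1)*p = p*(k+1) by ring, pow_mul, hC1, one_pow, inv_one]
    · -- [y,z]
      refine comm_rel_of_commute (Commute.mul_left ?_ ?_)
      · exact ((cBC.pow_right (k+1)).inv_left).inv_right
      · exact (cCA.symm.pow_pow k (k+1)).inv_right
    · -- [x,y] = x^p
      rw [wSp, show S⁻¹ * (B⁻¹*A^k)⁻¹ * S = (S⁻¹*A^k*S)⁻¹ * (S⁻¹*B*S) by group,
        conj_pow_eq, wSA, wSB]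
      group
    · -- [x,z] = y
      rw [show S⁻¹ * ((C^(k+1))⁻¹)⁻¹ * S = S⁻¹*C^(k+1)*S by group, conj_pow_eq, wSC]
      rw [show (A⁻¹*B⁻¹*B⁻¹*C) = (A⁻¹*(B^2)⁻¹)*C by group]
      have cD1 : Commute (A⁻¹*(B^2)⁻¹) C :=
        Commute.mul_left (cCA.symm.inv_left) ((cBC.pow_left 2).inv_left)
      rw [cD1.mul_pow]
      have cAB2 : Commute A⁻¹ ((B^2)⁻¹) := ((cAB.pow_right 2).inv_left).inv_right
      rw [cAB2.mul_pow, inv_pow, inv_pow, mul_inv_cancel_right]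
      have cc : Commute (((B^2)^(k+1))⁻¹) ((A^k)⁻¹) :=
        (((cAB.symm.pow_pow 2 k).pow_left (k+1)).inv_left).inv_right
      rw [show (A^(k+1))⁻¹ * ((B^2)^(k+1))⁻¹ * (B⁻¹*A^k)⁻¹
          = (A^(k+1))⁻¹ * (((B^2)^(k+1))⁻¹ * (A^k)⁻¹) * B by group, cc.eq]
      rw [show (A^(k+1))⁻¹ * ((A^k)⁻¹ * ((B^2)^(k+1))⁻¹) * B
          = (A^(2*k+1))⁻¹ * (B^(2*k+1))⁻¹ by group, ← hk, hA1, hB1]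
      simp
  -- the homomorphisms
  set φ : PresentedGroup (relsW p) →* PresentedGroup (relsB p) :=
    PresentedGroup.toGroup hfBrel with hφdef
  set ψ : PresentedGroup (relsB p) →* PresentedGroup (relsW p) :=
    PresentedGroup.toGroup hgWrel with hψdef
  have hψφ : ψ.comp φ = MonoidHom.id _ := by
    apply PresentedGroup.ext
    intro i
    fin_cases i
    · show ψ (φ (PresentedGroup.of 0)) = PresentedGroup.of 0
      rw [hφdef, hψdef, PresentedGroup.toGroup.of, hfB0, hXdef, map_pow,
        PresentedGroup.toGroup.of, hgW0, wSp, hAdef]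
    · show ψ (φ (PresentedGroup.of 1)) = PresentedGroup.of 1
      rw [hφdef, hψdef, PresentedGroup.toGroup.of, hfB1, hm, hXdef, hYdef, map_mul, map_pow,
        map_inv, PresentedGroup.toGroup.of, PresentedGroup.toGroup.of, hgW0, hgW1,
        pow_mul, wSp, ← hBdef]
      group
    · show ψ (φ (PresentedGroup.of 2)) = PresentedGroup.of 2
      rw [hφdef, hψdef, PresentedGroup.toGroup.of, hfB2, hZdef, map_inv, map_pow,
        PresentedGroup.toGroup.of, hgW2,
        show (((C^(k+1))⁻¹)^2)⁻¹ = C^(2*k+1) * C by group, ← hk, hC1, one_mul, hCdef]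
    · show ψ (φ (PresentedGroup.of 3)) = PresentedGroup.of 3
      rw [hφdef, hψdef, PresentedGroup.toGroup.of, hfB3, hXdef,
        PresentedGroup.toGroup.of, hgW0, hSdef]
  have hφψ : φ.comp ψ = MonoidHom.id _ := by
    apply PresentedGroup.ext
    intro i
    fin_cases i
    · show φ (ψ (PresentedGroup.of 0)) = PresentedGroup.of 0
      rw [hφdef, hψdef, PresentedGroup.toGroup.of, hgW0, hSdef,
        PresentedGroup.toGroup.of, hfB3, hXdef]
    · show φ (ψ (PresentedGroup.of 1)) = PresentedGroup.of 1
      rw [hφdef, hψdef, PresentedGroup.toGroup.of, hgW1, hBdef, hAdef, map_mul, map_inv,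
        map_pow, PresentedGroup.toGroup.of, PresentedGroup.toGroup.of, hfB0, hfB1, hm,
        ← hYdef, show p*k = k*p by ring]
      group
    · show φ (ψ (PresentedGroup.of 2)) = PresentedGroup.of 2
      rw [hφdef, hψdef, PresentedGroup.toGroup.of, hgW2, hCdef, map_inv, map_pow,
        PresentedGroup.toGroup.of, hfB2,
        show (((Z^2)⁻¹)^(k+1))⁻¹ = Z^(2*k+1) * Z by group, ← hk, hZ1, one_mul, hZdef]
  refine ⟨MonoidHom.toMulEquiv φ ψ hψφ hφψ, ?_, ?_, ?_, ?_⟩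
  · show φ (PresentedGroup.of 0) = X^p
    rw [hφdef, PresentedGroup.toGroup.of, hfB0]
  · show φ (PresentedGroup.of 1) = X^(p*(p-1)/2) * Y⁻¹
    rw [hφdef, PresentedGroup.toGroup.of, hfB1]
  · show φ (PresentedGroup.of 2) = (Z^2)⁻¹
    rw [hφdef, PresentedGroup.toGroup.of, hfB2]
  · show φ (PresentedGroup.of 3) = X
    rw [hφdef, PresentedGroup.toGroup.of, hfB3]
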